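/- For any two non-negative functions μ, ν in L¹(ℝ²) each with integral equal to one, and any α in (0,1), the modified relative entropy H_α[μ|ν] := ∫ μ log(μ/(αμ+(1-α)ν)) satisfies ((1-α)²/2)·‖μ-ν‖²_{L¹} ≤ H_α[μ|ν] ≤ ((1-α)/α)·‖μ-ν‖_{L¹}. -/

import Mathlib

open MeasureTheory Real Set

private lemma second_nonneg {x : ℝ} (hx : 0 < x) : 0 ≤ 4*Real.log x + 4/x - 4 := by
  have h := Real.one_sub_inv_le_log_of_pos hx
  have h4 : (4:ℝ)/x = 4*x⁻¹ := div_eq_mul_inv 4 x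
  linarith

private lemma h1_deriv {x : ℝ} (hx : 0 < x) :
    HasDerivAt (fun x : ℝ => 4*(x+1)*Real.log x - 8*(x-1)) (4*Real.log x + 4/x - 4) x := by
  have h1 : HasDerivAt (fun x : ℝ => 4*(x+1)) 4 x := by
    simpa using ((hasDerivAt_id x).add_const 1).const_mul (4:ℝ)
  have h2 : HasDerivAt Real.log (1/x) x := by
    simpa [one_div] using Real.hasDerivAt_log hx.ne'
  have h3 := h1.mul h2
  have h4 : HasDerivAt (fun x : ℝ => 8*(x-1)) 8 x := by
    simpa using ((hasDerivAt_id x).sub_const 1).const_mul (8:ℝ)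
  refine (h3.sub h4).congr_deriv ?_
  field_simp
  ring

private lemma h_deriv {x : ℝ} (hx : 0 < x) :
    HasDerivAt (fun x : ℝ => 2*(x+2)*(x*Real.log x - x + 1) - 3*(x-1)^2)
      (4*(x+1)*Real.log x - 8*(x-1)) x := by
  have h1 : HasDerivAt (fun x : ℝ => 2*(x+2)) 2 x := by
    simpa using ((hasDerivAt_id x).add_const 2).const_mul (2:ℝ)
  have h2 : HasDerivAt (fun x : ℝ => x*Real.log x - x + 1) (Real.log x) x := by
    have := (Real.hasDerivAt_mul_log hx.ne').sub (hasDerivAt_id x)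
    simpa using this.add_const 1
  have h3 := h1.mul h2
  have h4 : HasDerivAt (fun x : ℝ => 3*(x-1)^2) (3*(2*(x-1))) x := by
    have : HasDerivAt (fun x : ℝ => (x-1)^2) (2*(x-1)) x := by
      exact (((hasDerivAt_id x).sub_const 1).pow 2).congr_deriv (by simp)
    simpa using this.const_mul (3:ℝ)
  refine (h3.sub h4).congr_deriv ?_
  ring

private lemma h1_nonneg : ∀ x ∈ Ici (1:ℝ), 0 ≤ 4*(x+1)*Real.log x - 8*(x-1) := by
  have hmono : MonotoneOn (fun x : ℝ => 4*(x+1)*Real.log x - 8*(x-1)) (Ici 1) := by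
    apply monotoneOn_of_deriv_nonneg (convex_Ici 1)
    · apply ContinuousOn.sub
      · exact (continuousOn_const.mul (continuousOn_id.add continuousOn_const)).mul
          (Real.continuousOn_log.mono (by intro x hx; simp at hx ⊢; linarith))
      · fun_prop
    · intro x hx
      rw [interior_Ici] at hx
      exact (h1_deriv (by linarith [mem_Ioi.mp hx] : (0:ℝ) < x)).differentiableAt.differentiableWithinAt
    · intro x hx
      rw [interior_Ici] at hx
      have hx1 : (1:ℝ) < x := hx
      have hx0 : (0:ℝ) < x := by linarith
      rw [(h1_deriv hx0).deriv]
      exact second_nonneg hx0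
  intro x hx
  have := hmono (le_refl (1:ℝ)) hx hx
  simpa using this

private lemma h1_nonpos : ∀ x ∈ Ioc (0:ℝ) 1, 4*(x+1)*Real.log x - 8*(x-1) ≤ 0 := by
  have hmono : MonotoneOn (fun x : ℝ => 4*(x+1)*Real.log x - 8*(x-1)) (Ioc 0 1) := by
    apply monotoneOn_of_deriv_nonneg (convex_Ioc 0 1)
    · apply ContinuousOn.sub
      · exact (continuousOn_const.mul (continuousOn_id.add continuousOn_const)).mul
          (Real.continuousOn_log.mono (by intro x hx; simp at hx ⊢; linarith [hx.1]))
      · fun_prop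
    · intro x hx
      rw [interior_Ioc] at hx
      exact (h1_deriv hx.1).differentiableAt.differentiableWithinAt
    · intro x hx
      rw [interior_Ioc] at hx
      have hx0 : (0:ℝ) < x := hx.1
      rw [(h1_deriv hx0).deriv]
      exact second_nonneg hx0
  intro x hx
  have := hmono hx (by constructor <;> norm_num) hx.2
  simpa using this

/-- Key pointwise inequality for Pinsker: `3(x-1)² ≤ 2(x+2)(x log x - x + 1)` for `x ≥ 0`. -/
private lemma key_ineq {x : ℝ} (hx : 0 ≤ x) :
    3*(x-1)^2 ≤ 2*(x+2)*(x*Real.log x - x + 1) := by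
  rcases eq_or_lt_of_le hx with h0 | h0
  · rw [← h0]; norm_num
  set h : ℝ → ℝ := fun x => 2*(x+2)*(x*Real.log x - x + 1) - 3*(x-1)^2 with hh
  have hcont : Continuous h := by
    apply Continuous.sub
    · exact (continuous_const.mul (continuous_id.add continuous_const)).mul
        ((Real.continuous_mul_log.sub continuous_id).add continuous_const)
    · fun_prop
  have hge : 0 ≤ h x := by
    rcases le_or_gt x 1 with hx1 | hx1
    · have hanti : AntitoneOn h (Ioc 0 1) := by
        apply antitoneOn_of_deriv_nonpos (convex_Ioc 0 1) hcont.continuousOn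
        · intro y hy
          rw [interior_Ioc] at hy
          exact (h_deriv hy.1).differentiableAt.differentiableWithinAt
        · intro y hy
          rw [interior_Ioc] at hy
          rw [(h_deriv hy.1).deriv]
          exact h1_nonpos y ⟨hy.1, hy.2.le⟩
      have h1 : h 1 = 0 := by simp [hh]
      have := hanti (mem_Ioc.mpr ⟨h0, hx1⟩) (by norm_num) hx1
      rw [h1] at this; exact this
    · have hmono : MonotoneOn h (Ici 1) := by
        apply monotoneOn_of_deriv_nonneg (convex_Ici 1) hcont.continuousOn
        · intro y hy
          rw [interior_Ici] at hy
          exact (h_deriv (by linarith [mem_Ioi.mp hy] : (0:ℝ) < y)).differentiableAt.differentiableWithinAt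
        · intro y hy
          rw [interior_Ici] at hy
          rw [(h_deriv (by linarith [mem_Ioi.mp hy] : (0:ℝ) < y)).deriv]
          exact h1_nonneg y (mem_Ioi.mp hy).le
      have h1 : h 1 = 0 := by simp [hh]
      have := hmono (by norm_num) (mem_Ici.mpr hx1.le) hx1.le
      rw [h1] at this; exact this
  simpa [hh] using hge

private lemma s_nonneg {α a b : ℝ} (hα0 : 0 < α) (hα1 : α < 1) (ha : 0 ≤ a) (hb : 0 ≤ b) :
    0 ≤ α*a + (1-α)*b := by nlinarith

private lemma P2 {α a b : ℝ} (hα0 : 0 < α) (hα1 : α < 1) (ha : 0 ≤ a) (hb : 0 ≤ b) :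
    a - (α*a + (1-α)*b) ≤ a * Real.log (a / (α*a + (1-α)*b)) := by
  rcases eq_or_lt_of_le ha with h0 | h0
  · rw [← h0]; simp; nlinarith
  · set s := α*a + (1-α)*b with hs
    have hspos : 0 < s := by nlinarith
    have hlog : Real.log (s/a) ≤ s/a - 1 := Real.log_le_sub_one_of_pos (by positivity)
    have hneg : Real.log (a/s) = - Real.log (s/a) := by rw [← Real.log_inv, inv_div]
    have h2 : a * (s/a - 1) = s - a := by field_simp
    have h3 := mul_le_mul_of_nonneg_left hlog ha
    rw [hneg]
    nlinarith

private lemma P1 {α a b : ℝ} (hα0 : 0 < α) (hα1 : α < 1) (ha : 0 ≤ a) (hb : 0 ≤ b) :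
    a * Real.log (a / (α*a + (1-α)*b)) ≤ ((1-α)/α) * |a - b| := by
  rcases eq_or_lt_of_le ha with h0 | h0
  · rw [← h0]; simp
    exact mul_nonneg (div_nonneg (by linarith) hα0.le) (abs_nonneg _)
  · set s := α*a + (1-α)*b with hs
    have hspos : 0 < s := by nlinarith
    have hlog : Real.log (a/s) ≤ a/s - 1 := Real.log_le_sub_one_of_pos (by positivity)
    have h1 : a * Real.log (a/s) ≤ a * (a/s - 1) := mul_le_mul_of_nonneg_left hlog ha
    have e1 : a * (a/s - 1) = (1-α)*(a-b)*(a/s) := by field_simp; ring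
    rcases le_total b a with hba | hab
    · rw [abs_of_nonneg (by linarith : (0:ℝ) ≤ a - b)]
      have e2 : a/s ≤ 1/α := by
        rw [div_le_div_iff₀ hspos hα0]; nlinarith
      have h3 : (1-α)*(a-b)*(a/s) ≤ (1-α)*(a-b)*(1/α) :=
        mul_le_mul_of_nonneg_left e2 (by nlinarith)
      calc a * Real.log (a/s) ≤ (1-α)*(a-b)*(a/s) := by rw [← e1]; exact h1
        _ ≤ (1-α)*(a-b)*(1/α) := h3
        _ = (1-α)/α * (a-b) := by ring
    · have h3 : (1-α)*(a-b)*(a/s) ≤ 0 :=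
        mul_nonpos_of_nonpos_of_nonneg (by nlinarith) (by positivity)
      have h4 : 0 ≤ ((1-α)/α) * |a-b| :=
        mul_nonneg (div_nonneg (by linarith) hα0.le) (abs_nonneg _)
      calc a * Real.log (a/s) ≤ (1-α)*(a-b)*(a/s) := by rw [← e1]; exact h1
        _ ≤ 0 := h3
        _ ≤ _ := h4

private lemma P4 {α a b : ℝ} (hα0 : 0 < α) (hα1 : α < 1) (ha : 0 ≤ a) (hb : 0 ≤ b) :
    3*(a - (α*a + (1-α)*b))^2
    ≤ 2*(a + 2*(α*a + (1-α)*b)) *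
      (a * Real.log (a / (α*a + (1-α)*b)) - a + (α*a + (1-α)*b)) := by
  rcases eq_or_lt_of_le (s_nonneg hα0 hα1 ha hb) with h0 | h0
  · have ha0 : a = 0 := by nlinarith
    have hb0 : b = 0 := by nlinarith
    rw [ha0, hb0]; norm_num
  · set s := α*a + (1-α)*b with hs
    have hxs : 0 ≤ a/s := by positivity
    have key := key_ineq hxs
    set L := Real.log (a/s) with hL
    have e1 : 3*(a-s)^2 = s^2 * (3*(a/s-1)^2) := by field_simp
    have e2 : 2*(a+2*s) * (a * L - a + s)
        = s^2 * (2*(a/s+2)*((a/s)*L - a/s + 1)) := by field_simp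
    rw [e1, e2]
    exact mul_le_mul_of_nonneg_left key (sq_nonneg s)

private lemma rpow_two' (x : ℝ) : x ^ (2:ℝ) = x ^ 2 := by
  rw [show (2:ℝ) = ((2:ℕ):ℝ) by norm_num, Real.rpow_natCast]

/-- Csiszár–Kullback-type bounds for the modified relative entropy
`H_α[μ|ν] = ∫ μ log(μ/(αμ+(1-α)ν))`. -/
theorem stmt0 (μ ν : ℝ × ℝ → ℝ) (α : ℝ) (hα : α ∈ Set.Ioo (0 : ℝ) 1)
    (hμ0 : ∀ u, 0 ≤ μ u) (hν0 : ∀ u, 0 ≤ ν u)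
    (hμint : Integrable μ) (hνint : Integrable ν)
    (hμ1 : ∫ u, μ u = 1) (hν1 : ∫ u, ν u = 1) :
    ((1 - α) ^ 2 / 2) * (∫ u, |μ u - ν u|) ^ 2
        ≤ ∫ u, μ u * Real.log (μ u / (α * μ u + (1 - α) * ν u)) ∧
    (∫ u, μ u * Real.log (μ u / (α * μ u + (1 - α) * ν u)))
        ≤ ((1 - α) / α) * ∫ u, |μ u - ν u| := by
  obtain ⟨hα0, hα1⟩ := hα
  set F : ℝ × ℝ → ℝ := fun u => μ u * Real.log (μ u / (α * μ u + (1 - α) * ν u)) with hFdef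
  set σ : ℝ × ℝ → ℝ := fun u => α * μ u + (1 - α) * ν u with hσdef
  have hσ0 : ∀ u, 0 ≤ σ u := fun u => s_nonneg hα0 hα1 (hμ0 u) (hν0 u)
  have hσint : Integrable σ := (hμint.const_mul α).add (hνint.const_mul (1-α))
  have hσ1 : ∫ u, σ u = 1 := by
    simp only [hσdef]
    rw [integral_add (hμint.const_mul α) (hνint.const_mul (1-α)),
        integral_const_mul, integral_const_mul, hμ1, hν1]; ring
  have hFm : AEStronglyMeasurable F volume :=
    (hμint.aemeasurable.mul
      (Real.measurable_log.comp_aemeasurable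
        (hμint.aemeasurable.div hσint.aemeasurable))).aestronglyMeasurable
  have hub : ∀ u, F u ≤ ((1-α)/α) * |μ u - ν u| := fun u => P1 hα0 hα1 (hμ0 u) (hν0 u)
  have hlb : ∀ u, μ u - σ u ≤ F u := fun u => P2 hα0 hα1 (hμ0 u) (hν0 u)
  have hMNint : Integrable (fun u => |μ u - ν u|) := (hμint.sub hνint).abs
  have habs : ∀ u, |F u| ≤ ((1-α)/α) * |μ u - ν u| := by
    intro u
    rw [abs_le]
    have h3 : (1-α) ≤ (1-α)/α := by
      rw [le_div_iff₀ hα0]; nlinarith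
    have h4 := abs_nonneg (μ u - ν u)
    have h5 : (1-α) * (-(|μ u - ν u|)) ≤ (1-α) * (μ u - ν u) :=
      mul_le_mul_of_nonneg_left (neg_abs_le _) (by linarith)
    have h6 : (1-α)*|μ u - ν u| ≤ (1-α)/α*|μ u - ν u| :=
      mul_le_mul_of_nonneg_right h3 h4
    have e : μ u - σ u = (1-α) * (μ u - ν u) := by simp only [hσdef]; ring
    exact ⟨by nlinarith [hlb u], hub u⟩
  have hFint : Integrable F :=
    Integrable.mono' (hMNint.const_mul ((1-α)/α)) hFm
      (Filter.Eventually.of_forall fun u => by rw [Real.norm_eq_abs]; exact habs u)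
  set T : ℝ := ∫ u, |μ u - ν u| with hTdef
  have hT0 : 0 ≤ T := integral_nonneg fun u => abs_nonneg _
  constructor
  · -- lower bound (Pinsker)
    set G : ℝ × ℝ → ℝ := fun u => F u - μ u + σ u with hGdef
    have hG0 : ∀ u, 0 ≤ G u := fun u => by have := hlb u; simp only [hGdef]; linarith
    have hGint : Integrable G := (hFint.sub hμint).add hσint
    have hGi : ∫ u, G u = ∫ u, F u := by
      simp only [hGdef]
      have hFμ : Integrable (fun u => F u - μ u) := hFint.sub hμint
      rw [integral_add hFμ hσint, integral_sub hFint hμint, hμ1, hσ1]; ring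
    have hH0 : 0 ≤ ∫ u, F u := hGi ▸ integral_nonneg hG0
    set P : ℝ × ℝ → ℝ := fun u => Real.sqrt ((2/3) * (μ u + 2 * σ u)) with hPdef
    set Q : ℝ × ℝ → ℝ := fun u => Real.sqrt (G u) with hQdef
    have hPsqint : Integrable (fun u => (2/3) * (μ u + 2 * σ u)) :=
      (hμint.add (hσint.const_mul 2)).const_mul (2/3)
    have hPm : AEStronglyMeasurable P volume :=
      (Real.continuous_sqrt.measurable.comp_aemeasurable
        hPsqint.aemeasurable).aestronglyMeasurable
    have hQm : AEStronglyMeasurable Q volume :=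
      (Real.continuous_sqrt.measurable.comp_aemeasurable
        hGint.aemeasurable).aestronglyMeasurable
    have hPsq : ∀ u, P u ^ 2 = (2/3) * (μ u + 2 * σ u) := fun u =>
      Real.sq_sqrt (by have := hμ0 u; have := hσ0 u; positivity)
    have hQsq : ∀ u, Q u ^ 2 = G u := fun u => Real.sq_sqrt (hG0 u)
    have hP2 : MemLp P 2 volume :=
      (memLp_two_iff_integrable_sq hPm).mpr
        (hPsqint.congr (Filter.Eventually.of_forall fun u => (hPsq u).symm))
    have hQ2 : MemLp Q 2 volume :=
      (memLp_two_iff_integrable_sq hQm).mpr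
        (hGint.congr (Filter.Eventually.of_forall fun u => (hQsq u).symm))
    have h2e : ENNReal.ofReal (2:ℝ) = 2 := by norm_num
    have hconj : Real.HolderConjugate 2 2 := Real.HolderConjugate.two_two
    have hHold := integral_mul_le_Lp_mul_Lq_of_nonneg hconj
      (Filter.Eventually.of_forall fun u => Real.sqrt_nonneg _)
      (Filter.Eventually.of_forall fun u => Real.sqrt_nonneg _)
      (h2e ▸ hP2) (h2e ▸ hQ2)
    -- compute the two integrals of squares
    have hInt1 : ∫ u, P u ^ (2:ℝ) = 2 := by
      have : ∀ u, P u ^ (2:ℝ) = (2/3) * (μ u + 2 * σ u) := by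
        intro u
        rw [rpow_two', hPsq u]
      rw [integral_congr_ae (Filter.Eventually.of_forall this),
          integral_const_mul, integral_add hμint (hσint.const_mul 2),
          integral_const_mul, hμ1, hσ1]
      norm_num
    have hInt2 : ∫ u, Q u ^ (2:ℝ) = ∫ u, F u := by
      have : ∀ u, Q u ^ (2:ℝ) = G u := by
        intro u
        rw [rpow_two', hQsq u]
      rw [integral_congr_ae (Filter.Eventually.of_forall this), hGi]
    rw [hInt1, hInt2] at hHold
    -- |μ - σ| ≤ P * Q pointwise
    have hPQ : ∀ u, |μ u - σ u| ≤ P u * Q u := by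
      intro u
      have h4 : 3*(μ u - σ u)^2 ≤ 2*(μ u + 2*σ u) * G u := by
        have := P4 hα0 hα1 (hμ0 u) (hν0 u)
        simp only [hGdef, hFdef, hσdef]
        convert this using 2 <;> simp [hσdef]
      simp only [hPdef, hQdef]
      rw [← Real.sqrt_mul (by have := hμ0 u; have := hσ0 u; positivity),
          ← Real.sqrt_sq_eq_abs]
      apply Real.sqrt_le_sqrt
      have h5 : 2/3*(μ u + 2*σ u)*G u = (2*(μ u + 2*σ u)*G u)/3 := by ring
      rw [h5]; clear_value G σ F; linarith [h4]
    have hPQint : Integrable (fun u => P u * Q u) := by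
      apply Integrable.mono' ((hPsqint.add hGint).const_mul (1/2))
        (hPm.mul hQm)
      apply Filter.Eventually.of_forall
      intro u
      simp only [Pi.mul_apply, Pi.add_apply, Real.norm_eq_abs]
      rw [abs_of_nonneg (mul_nonneg (Real.sqrt_nonneg _) (Real.sqrt_nonneg _))]
      have goal' : P u * Q u ≤ 1/2 * (2/3*(μ u + 2*σ u) + G u) := by
        have e4 := hPsq u; have e5 := hQsq u
        clear_value P Q G σ F
        nlinarith [sq_nonneg (P u - Q u), e4, e5]
      exact goal'
    have hMSint : Integrable (fun u => |μ u - σ u|) := (hμint.sub hσint).abs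
    have hstep : (1-α) * T ≤ ∫ u, P u * Q u := by
      have e1 : ∀ u, |μ u - σ u| = (1-α) * |μ u - ν u| := by
        intro u
        rw [← abs_of_nonneg (by linarith : (0:ℝ) ≤ 1-α), ← abs_mul]
        congr 1; simp only [hσdef]; ring
      have e2 : ∫ u, |μ u - σ u| = (1-α) * T := by
        rw [integral_congr_ae (Filter.Eventually.of_forall e1), integral_const_mul, hTdef]
      rw [← e2]
      exact integral_mono hMSint hPQint hPQ
    have hchain : (1-α) * T ≤ (2:ℝ) ^ ((1:ℝ)/2) * (∫ u, F u) ^ ((1:ℝ)/2) :=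
      le_trans hstep hHold
    have hsq := pow_le_pow_left₀ (by nlinarith : (0:ℝ) ≤ (1-α)*T) hchain 2
    have e3 : ((2:ℝ) ^ ((1:ℝ)/2) * (∫ u, F u) ^ ((1:ℝ)/2))^2 = 2 * ∫ u, F u := by
      rw [mul_pow, ← Real.rpow_natCast ((2:ℝ) ^ ((1:ℝ)/2)) 2,
          ← Real.rpow_natCast ((∫ u, F u) ^ ((1:ℝ)/2)) 2,
          ← Real.rpow_mul (by norm_num : (0:ℝ) ≤ 2),
          ← Real.rpow_mul hH0]
      norm_num
    rw [e3] at hsq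
    clear_value T G σ F
    nlinarith [hsq]
  · -- upper bound
    have := integral_mono hFint (hMNint.const_mul ((1-α)/α)) hub
    rw [integral_const_mul] at this
    exact this
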